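/- Let n ≥ 3 and let e be a natural number with e ≤ ⌊n²/4⌋ + ⌊(n−1)/2⌋ − 1, and let g(e) = min{|e − x·(n−x)| : x ∈ ℕ, 0 ≤ x ≤ n/2}. Then there exists a simple graph G with n vertices and e edges such that f(G) = g(e)·(n − g(e) − 1). -/

import Mathlib

open Finset

open Classical in
/-- A triple of distinct vertices is *frustrated* if it induces an odd number of edges. -/
noncomputable def frustrated {V : Type*} (G : SimpleGraph V) (u v w : V) : Prop :=
  Odd ((if G.Adj u v then 1 else 0) + (if G.Adj u w then 1 else 0) +
       (if G.Adj v w then 1 else 0) : ℕ)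

/-- The number of frustrated triangles of `G`: the number of 3-element vertex subsets
inducing an odd number of edges. -/
noncomputable def fCount {V : Type*} [Fintype V] [DecidableEq V] (G : SimpleGraph V) : ℕ := by
  classical
  exact ((Finset.univ.powersetCard 3).filter
    (fun s : Finset V => ∃ u v w : V, u ≠ v ∧ u ≠ w ∧ v ≠ w ∧ s = {u, v, w} ∧
      frustrated G u v w)).card

section Aux
variable {n x : ℕ} {c : Fin n} {L : Finset (Fin n)}

/-- cross indicator -/
def crB (x : ℕ) (u v : Fin n) : Bool := xor (decide (u.val < x)) (decide (v.val < x))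

/-- star indicator -/
def stB (c : Fin n) (L : Finset (Fin n)) (u v : Fin n) : Bool :=
  decide ((u = c ∧ v ∈ L) ∨ (v = c ∧ u ∈ L))

lemma crB_comm (u v : Fin n) : crB x u v = crB x v u := by
  simp [crB, Bool.xor_comm]

lemma stB_comm (u v : Fin n) : stB c L u v = stB c L v u := by
  simp only [stB]; congr 1; exact propext (by tauto)

def myG (n x : ℕ) (c : Fin n) (L : Finset (Fin n)) : SimpleGraph (Fin n) where
  Adj u v := u ≠ v ∧ xor (crB x u v) (stB c L u v) = true
  symm := by
    refine ⟨?_⟩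
    intro u v ⟨h1, h2⟩
    exact ⟨h1.symm, by rwa [crB_comm v u, stB_comm v u]⟩
  loopless := by refine ⟨?_⟩; intro u ⟨h1, _⟩; exact h1 rfl

instance : DecidableRel (myG n x c L).Adj := fun u v =>
  inferInstanceAs (Decidable (u ≠ v ∧ _ = true))

lemma myG_adj {u v : Fin n} :
    (myG n x c L).Adj u v ↔ u ≠ v ∧ xor (crB x u v) (stB c L u v) = true := Iff.rfl

lemma key_bool : ∀ (b1 b2 b3 s1 s2 s3 : Bool), (xor b1 (xor b2 b3)) = false →
    (Odd ((if (xor b1 s1) = true then 1 else 0) + (if (xor b2 s2) = true then 1 else 0)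
      + (if (xor b3 s3) = true then 1 else 0) : ℕ) ↔ (xor s1 (xor s2 s3)) = true) := by
  decide

lemma cr_parity : ∀ a b c : Bool, xor (xor a b) (xor (xor a c) (xor b c)) = false := by decide

lemma frustrated_iff {u v w : Fin n} (huv : u ≠ v) (huw : u ≠ w) (hvw : v ≠ w) :
    frustrated (myG n x c L) u v w ↔
      xor (stB c L u v) (xor (stB c L u w) (stB c L v w)) = true := by
  have i1 : (myG n x c L).Adj u v ↔ xor (crB x u v) (stB c L u v) = true := by
    simp [myG_adj, huv]
  have i2 : (myG n x c L).Adj u w ↔ xor (crB x u w) (stB c L u w) = true := by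
    simp [myG_adj, huw]
  have i3 : (myG n x c L).Adj v w ↔ xor (crB x v w) (stB c L v w) = true := by
    simp [myG_adj, hvw]
  simp only [frustrated]
  simp only [i1, i2, i3]
  exact key_bool _ _ _ _ _ _ (cr_parity _ _ _)


lemma st_c_right {a : Fin n} (ha : a ≠ c) : stB c L c a = decide (a ∈ L) := by
  simp [stB, ha]

lemma st_c_left {a : Fin n} (ha : a ≠ c) : stB c L a c = decide (a ∈ L) := by
  simp [stB, ha]

lemma st_none {a b : Fin n} (ha : a ≠ c) (hb : b ≠ c) : stB c L a b = false := by
  simp [stB, ha, hb]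

lemma helper_mem {a b : Fin n} (ha : a ∈ L) (hbL : b ∉ L) (hbc : b ≠ c) :
    ({c, a, b} : Finset (Fin n)) ∈
      (L ×ˢ (univ \ insert c L)).image (fun p : Fin n × Fin n => ({c, p.1, p.2} : Finset (Fin n))) := by
  exact mem_image.mpr ⟨(a, b), by simp [ha, hbL, hbc], rfl⟩

set_option maxHeartbeats 2000000 in
lemma fCount_myG (hcL : c ∉ L) :
    fCount (myG n x c L) = L.card * (n - L.card - 1) := by
  classical
  have himg : ((Finset.univ.powersetCard 3).filter
      (fun s : Finset (Fin n) => ∃ u v w : Fin n, u ≠ v ∧ u ≠ w ∧ v ≠ w ∧ s = {u, v, w} ∧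
        frustrated (myG n x c L) u v w)) =
      (L ×ˢ (univ \ insert c L)).image
        (fun p : Fin n × Fin n => ({c, p.1, p.2} : Finset (Fin n))) := by
    ext s
    constructor
    · intro hs
      simp only [mem_filter] at hs
      obtain ⟨-, u, v, w, huv, huw, hvw, rfl, hfr⟩ := hs
      rw [frustrated_iff huv huw hvw] at hfr
      by_cases hu : c = u
      · subst hu
        have hv : v ≠ c := huv.symm
        have hw : w ≠ c := huw.symm
        rw [st_c_right hv, st_c_right hw, st_none hv hw] at hfr
        by_cases hvL : v ∈ L
        · have hwL : w ∉ L := by simp [hvL] at hfr; simpa using hfr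
          exact helper_mem hvL hwL hw
        · have hwL : w ∈ L := by simp [hvL] at hfr; simpa using hfr
          rw [Finset.pair_comm v w]
          exact helper_mem hwL hvL hv
      · have hu : u ≠ c := fun h => hu h.symm
        by_cases hv : c = v
        · subst hv
          have hw : w ≠ c := hvw.symm
          rw [st_c_left hu, st_none hu hw, st_c_right hw] at hfr
          rw [Finset.insert_comm]
          by_cases huL : u ∈ L
          · have hwL : w ∉ L := by simp [huL] at hfr; simpa using hfr
            exact helper_mem huL hwL hw
          · have hwL : w ∈ L := by simp [huL] at hfr; simpa using hfr
            rw [Finset.pair_comm u w]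
            exact helper_mem hwL huL hu
        · have hv : v ≠ c := fun h => hv h.symm
          by_cases hw : c = w
          · subst hw
            rw [st_none hu hv, st_c_left hu, st_c_left hv] at hfr
            have hrot : ({u, v, c} : Finset (Fin n)) = {c, u, v} := by
              rw [Finset.pair_comm v c, Finset.insert_comm]
            rw [hrot]
            by_cases huL : u ∈ L
            · have hvL : v ∉ L := by simp [huL] at hfr; simpa using hfr
              exact helper_mem huL hvL hv
            · have hvL : v ∈ L := by simp [huL] at hfr; simpa using hfr
              rw [Finset.pair_comm u v]
              exact helper_mem hvL huL hu
          · have hw : w ≠ c := fun h => hw h.symm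
            rw [st_none hu hv, st_none hu hw, st_none hv hw] at hfr
            simp at hfr
    · intro hs
      obtain ⟨⟨l, w'⟩, hp, rfl⟩ := mem_image.mp hs
      simp only [mem_product, mem_sdiff, mem_insert, Finset.mem_univ, true_and] at hp
      obtain ⟨hl, hw'⟩ := hp
      push_neg at hw'
      obtain ⟨hw'c, hw'L⟩ := hw'
      have hcl : c ≠ l := fun h => hcL (h ▸ hl)
      have hlw : l ≠ w' := fun h => hw'L (h ▸ hl)
      have hcw : c ≠ w' := fun h => hw'c h.symm
      refine mem_filter.mpr ⟨mem_powersetCard.mpr ⟨subset_univ _, ?_⟩,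
        c, l, w', hcl, hcw, hlw, rfl, ?_⟩
      · exact Finset.card_eq_three.mpr ⟨c, l, w', hcl, hcw, hlw, rfl⟩
      · rw [frustrated_iff hcl hcw hlw, st_c_right hcl.symm, st_c_right hcw.symm,
          st_none (fun h => hcl h.symm) hw'c]
        simp [hl, hw'L]
  have hinj : Set.InjOn (fun p : Fin n × Fin n => ({c, p.1, p.2} : Finset (Fin n)))
      ↑(L ×ˢ (univ \ insert c L)) := by
    rintro ⟨a1, b1⟩ h1 ⟨a2, b2⟩ h2 heq
    simp only [mem_coe, mem_product, mem_sdiff, mem_insert, Finset.mem_univ, true_and] at h1 h2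
    obtain ⟨ha1, hb1⟩ := h1
    obtain ⟨ha2, hb2⟩ := h2
    push_neg at hb1 hb2
    simp only at heq
    have hma : a1 ∈ ({c, a2, b2} : Finset (Fin n)) := by
      rw [← heq]; simp
    have hmb : b1 ∈ ({c, a2, b2} : Finset (Fin n)) := by
      rw [← heq]; simp
    simp only [mem_insert, Finset.mem_singleton] at hma hmb
    have hea : a1 = a2 := by
      rcases hma with h | h | h
      · exact absurd (h ▸ ha1) hcL
      · exact h
      · exact absurd (h ▸ ha1) hb2.2
    have heb : b1 = b2 := by
      rcases hmb with h | h | h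
      · exact absurd h hb1.1
      · exact absurd (h ▸ ha2) hb1.2
      · exact h
    simp [hea, heb]
  have hfc : fCount (myG n x c L) = ((L ×ˢ (univ \ insert c L)).image
      (fun p : Fin n × Fin n => ({c, p.1, p.2} : Finset (Fin n)))).card := by
    rw [← himg, fCount]; convert rfl
  rw [hfc, Finset.card_image_of_injOn hinj, Finset.card_product,
    Finset.card_sdiff_of_subset (subset_univ _), Finset.card_insert_of_notMem hcL, Finset.card_univ,
    Fintype.card_fin]
  congr 1
def crossF (n x : ℕ) : Finset (Sym2 (Fin n)) :=
  ((univ.filter (fun v : Fin n => v.val < x)) ×ˢ (univ.filter (fun v : Fin n => ¬ v.val < x))).image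
    (fun p => s(p.1, p.2))

def starF (c : Fin n) (L : Finset (Fin n)) : Finset (Sym2 (Fin n)) :=
  L.image (fun l => s(c, l))

lemma cardA (hx : x ≤ n) : (univ.filter (fun v : Fin n => v.val < x)).card = x := by
  rw [show x = (Finset.range x).card from (Finset.card_range x).symm]
  apply Finset.card_bij (fun (a : Fin n) _ => a.val)
  · intro a ha
    simp only [mem_filter] at ha
    simpa using ha.2
  · intro a _ b _ hab
    exact Fin.val_injective hab
  · intro b hb
    simp only [Finset.mem_range] at hb
    exact ⟨⟨b, lt_of_lt_of_le hb hx⟩, by simpa using hb, rfl⟩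

lemma cardB (hx : x ≤ n) : (univ.filter (fun v : Fin n => ¬ v.val < x)).card = n - x := by
  have := Finset.card_filter_add_card_filter_not
    (s := (univ : Finset (Fin n))) (p := fun v : Fin n => v.val < x)
  rw [cardA hx, Finset.card_univ, Fintype.card_fin] at this
  omega

lemma crB_iff {u v : Fin n} : crB x u v = true ↔ ¬((u.val < x) ↔ (v.val < x)) := by
  simp [crB, decide_eq_decide]

lemma stB_iff {u v : Fin n} :
    stB c L u v = true ↔ (u = c ∧ v ∈ L) ∨ (v = c ∧ u ∈ L) := by
  simp [stB]

lemma mem_crossF {u v : Fin n} : s(u, v) ∈ crossF n x ↔ crB x u v = true := by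
  constructor
  · intro h
    obtain ⟨⟨a, b⟩, hab, heq⟩ := mem_image.mp h
    simp only [mem_product, mem_filter, Finset.mem_univ, true_and] at hab
    rw [Sym2.eq_iff] at heq
    rw [crB_iff]
    rcases heq with ⟨h1, h2⟩ | ⟨h1, h2⟩ <;> subst h1 <;> subst h2 <;> tauto
  · intro h
    rw [crB_iff] at h
    by_cases hu : u.val < x
    · have hv : ¬ v.val < x := fun hv => h ⟨fun _ => hv, fun _ => hu⟩
      exact mem_image.mpr ⟨(u, v), by simp only [mem_product, mem_filter, Finset.mem_univ, true_and]; exact ⟨hu, hv⟩, rfl⟩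
    · have hv : v.val < x := by tauto
      exact mem_image.mpr ⟨(v, u), by simp only [mem_product, mem_filter, Finset.mem_univ, true_and]; exact ⟨hv, hu⟩, Sym2.eq_swap⟩

lemma mem_starF (hcL : c ∉ L) {u v : Fin n} :
    s(u, v) ∈ starF c L ↔ stB c L u v = true := by
  rw [stB_iff]
  constructor
  · intro h
    obtain ⟨l, hl, heq⟩ := mem_image.mp h
    rw [Sym2.eq_iff] at heq
    rcases heq with ⟨h1, h2⟩ | ⟨h1, h2⟩
    · exact Or.inl ⟨h1.symm, h2 ▸ hl⟩
    · exact Or.inr ⟨h1.symm, h2 ▸ hl⟩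
  · rintro (⟨rfl, hv⟩ | ⟨rfl, hu⟩)
    · exact mem_image.mpr ⟨v, hv, rfl⟩
    · exact mem_image.mpr ⟨u, hu, Sym2.eq_swap⟩

lemma card_crossF (hx : x ≤ n) : (crossF n x).card = x * (n - x) := by
  rw [crossF, Finset.card_image_of_injOn, Finset.card_product, cardA hx, cardB hx]
  rintro ⟨a1, b1⟩ h1 ⟨a2, b2⟩ h2 heq
  simp only [mem_coe, mem_product, mem_filter, Finset.mem_univ, true_and] at h1 h2
  simp only [Sym2.eq_iff] at heq
  rcases heq with ⟨h3, h4⟩ | ⟨h3, h4⟩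
  · simp [Prod.ext_iff, h3, h4]
  · exact absurd (h3 ▸ h1.1) h2.2
lemma card_starF (hcL : c ∉ L) : (starF c L).card = L.card := by
  rw [starF, Finset.card_image_of_injOn]
  intro l1 h1 l2 h2 heq
  simp only [Sym2.eq_iff] at heq
  rcases heq with ⟨-, h⟩ | ⟨h1', h2'⟩
  · exact h
  · exact h2'.trans h1' 

lemma stB_ne {u v : Fin n} (hcL : c ∉ L) (h : stB c L u v = true) : u ≠ v := by
  rw [stB_iff] at h
  rintro rfl
  rcases h with ⟨rfl, h⟩ | ⟨rfl, h⟩ <;> exact hcL h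

lemma crB_ne {u v : Fin n} (h : crB x u v = true) : u ≠ v := by
  rintro rfl
  simp [crB] at h

lemma edge_added (hcL : c ∉ L) (hx : x ≤ n) (hB : ∀ a ∈ insert c L, ¬ a.val < x) :
    (myG n x c L).edgeFinset.card = x * (n - x) + L.card := by
  have hst_cr : ∀ u v : Fin n, stB c L u v = true → crB x u v = false := by
    intro u v h
    rw [stB_iff] at h
    have hu : u ∈ insert c L := by
      rcases h with ⟨h1, h2⟩ | ⟨h1, h2⟩
      · rw [h1]; exact Finset.mem_insert_self _ _
      · exact Finset.mem_insert_of_mem h2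
    have hv : v ∈ insert c L := by
      rcases h with ⟨h1, h2⟩ | ⟨h1, h2⟩
      · exact Finset.mem_insert_of_mem h2
      · rw [h1]; exact Finset.mem_insert_self _ _
    simp [crB, hB u hu, hB v hv]
  have hE : (myG n x c L).edgeFinset = crossF n x ∪ starF c L := by
    ext z
    induction z using Sym2.ind with
    | _ u v =>
      rw [SimpleGraph.mem_edgeFinset, SimpleGraph.mem_edgeSet, myG_adj, Finset.mem_union,
        mem_crossF, mem_starF hcL]
      constructor
      · rintro ⟨hne, hxor⟩
        rcases Bool.eq_false_or_eq_true (crB x u v) with h | h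
        · exact Or.inl h
        · right
          cases hs : stB c L u v
          · rw [h, hs] at hxor; simp at hxor
          · rfl
      · rintro (h | h)
        · have hs : stB c L u v = false := by
            cases hs : stB c L u v
            · rfl
            · rw [hst_cr u v hs] at h; simp at h
          exact ⟨crB_ne h, by rw [h, hs]; rfl⟩
        · exact ⟨stB_ne hcL h, by rw [h, hst_cr u v h]; rfl⟩
  have hdisj : Disjoint (crossF n x) (starF c L) := by
    rw [Finset.disjoint_left]
    intro z hz1 hz2
    induction z using Sym2.ind with
    | _ u v =>
      rw [mem_crossF] at hz1
      rw [mem_starF hcL] at hz2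
      rw [hst_cr u v hz2] at hz1
      simp at hz1
  rw [hE, Finset.card_union_of_disjoint hdisj, card_crossF hx, card_starF hcL]

lemma edge_removed (hcL : c ∉ L) (hx : x ≤ n) (hc : c.val < x)
    (hL : ∀ l ∈ L, ¬ l.val < x) :
    (myG n x c L).edgeFinset.card = x * (n - x) - L.card := by
  have hst_cr : ∀ u v : Fin n, stB c L u v = true → crB x u v = true := by
    intro u v h
    rw [stB_iff] at h
    rcases h with ⟨rfl, h⟩ | ⟨rfl, h⟩ <;>
      simp [crB, hc, hL _ h]
  have hE : (myG n x c L).edgeFinset = crossF n x \ starF c L := by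
    ext z
    induction z using Sym2.ind with
    | _ u v =>
      rw [SimpleGraph.mem_edgeFinset, SimpleGraph.mem_edgeSet, myG_adj, Finset.mem_sdiff,
        mem_crossF, mem_starF hcL]
      constructor
      · rintro ⟨hne, hxor⟩
        cases hs : stB c L u v
        · refine ⟨?_, by simp⟩
          rw [hs] at hxor; simpa using hxor
        · rw [hst_cr u v hs, hs] at hxor; simp at hxor
      · rintro ⟨h1, h2⟩
        have hs : stB c L u v = false := by simpa using h2
        exact ⟨crB_ne h1, by rw [h1, hs]; rfl⟩
  have hsub : starF c L ⊆ crossF n x := by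
    intro z hz
    induction z using Sym2.ind with
    | _ u v =>
      rw [mem_starF hcL] at hz
      rw [mem_crossF]
      exact hst_cr u v hz
  rw [hE, Finset.card_sdiff_of_subset hsub, card_crossF hx, card_starF hcL]

lemma ncard_myG : (myG n x c L).edgeSet.ncard = (myG n x c L).edgeFinset.card := by
  rw [← SimpleGraph.coe_edgeFinset, Set.ncard_coe_finset]


end Aux
theorem frustrated_triangles_lower_bound_achieved
    (n : ℕ) (hn : 3 ≤ n) (e : ℕ) (he : e ≤ n ^ 2 / 4 + (n - 1) / 2 - 1) (g : ℕ)
    (hg : IsLeast {d : ℕ | ∃ x : ℕ, x ≤ n / 2 ∧ d = ((e : ℤ) - x * ((n : ℤ) - x)).natAbs} g) :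
    ∃ G : SimpleGraph (Fin n), G.edgeSet.ncard = e ∧ fCount G = g * (n - g - 1) := by
  obtain ⟨⟨x₀, hx₀, hgeq⟩, hmin⟩ := hg
  have hx0n : x₀ ≤ n := le_trans hx₀ (Nat.div_le_self n 2)
  have hcast : (e : ℤ) - (x₀ : ℤ) * ((n : ℤ) - (x₀ : ℤ))
      = (e : ℤ) - ((x₀ * (n - x₀) : ℕ) : ℤ) := by
    rw [Nat.cast_mul, Nat.cast_sub hx0n]
  set p := x₀ * (n - x₀) with hp
  have hgeq' : g = ((e : ℤ) - (p : ℤ)).natAbs := by rw [hgeq, hcast]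
  by_cases hpe : p ≤ e
  · -- add a star inside the big part
    have hge : e = p + g := by omega
    have hbound : g + 1 ≤ n - x₀ := by
      by_cases hx1 : x₀ + 1 ≤ n / 2
      · have h2 := hmin ⟨x₀ + 1, hx1, rfl⟩
        have hprod : ((x₀ + 1 : ℕ) : ℤ) * ((n : ℤ) - ((x₀ + 1 : ℕ) : ℤ))
            = (e : ℤ) - ((e : ℤ) - (p : ℤ) - ((n : ℤ) - 2 * (x₀ : ℤ) - 1)) := by
          rw [hp]
          push_cast [Nat.cast_sub hx0n]
          ring
        rw [hprod] at h2
        omega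
      · have hx2 : x₀ = n / 2 := by omega
        rcases Nat.even_or_odd n with ⟨k, hk⟩ | ⟨k, hk⟩
        · have hxk : x₀ = k := by omega
          have hnx : n - x₀ = k := by omega
          have hpq : p = k * k := by rw [hp, hxk, show n - k = k from by omega]
          have hsq : n ^ 2 = 4 * (k * k) := by rw [hk]; ring
          omega
        · have hxk : x₀ = k := by omega
          have hnx : n - x₀ = k + 1 := by omega
          have hpq : p = k * (k + 1) := by rw [hp, hxk, show n - k = k + 1 from by omega]
          have hsq : n ^ 2 = 4 * (k * (k + 1)) + 1 := by rw [hk]; ring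
          omega
    have hBcard : (univ.filter (fun v : Fin n => ¬ v.val < x₀)).card = n - x₀ := cardB hx0n
    obtain ⟨t, htB, htcard⟩ := Finset.exists_subset_card_eq
      (show g + 1 ≤ (univ.filter (fun v : Fin n => ¬ v.val < x₀)).card by omega)
    have htne : t.Nonempty := by rw [← Finset.card_pos, htcard]; omega
    obtain ⟨c, hc⟩ := htne
    have hcL : c ∉ t.erase c := Finset.notMem_erase c t
    have hLcard : (t.erase c).card = g := by
      rw [Finset.card_erase_of_mem hc, htcard]
      omega
    have hins : ∀ a ∈ insert c (t.erase c), ¬ a.val < x₀ := by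
      intro a ha
      have hat : a ∈ t := by
        rcases Finset.mem_insert.mp ha with rfl | h
        · exact hc
        · exact Finset.mem_of_mem_erase h
      exact (Finset.mem_filter.mp (htB hat)).2
    refine ⟨myG n x₀ c (t.erase c), ?_, ?_⟩
    · rw [ncard_myG, edge_added hcL hx0n hins, hLcard]
      omega
    · rw [fCount_myG hcL, hLcard]
  · -- remove a star
    have hge : e + g = p := by omega
    have hg1 : 1 ≤ g := by omega
    have hx0pos : 1 ≤ x₀ := by
      rcases Nat.eq_zero_or_pos x₀ with h | h
      · rw [h] at hp; simp at hp; omega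
      · exact h
    have hbound : g ≤ n - x₀ := by
      have hx1 : x₀ - 1 ≤ n / 2 := by omega
      have h2 := hmin ⟨x₀ - 1, hx1, rfl⟩
      have hprod : ((x₀ - 1 : ℕ) : ℤ) * ((n : ℤ) - ((x₀ - 1 : ℕ) : ℤ))
          = (e : ℤ) - ((e : ℤ) - (p : ℤ) + ((n : ℤ) - 2 * (x₀ : ℤ) + 1)) := by
        rw [hp]
        push_cast [Nat.cast_sub hx0n, Nat.cast_sub hx0pos]
        ring
      rw [hprod] at h2
      omega
    have hBcard : (univ.filter (fun v : Fin n => ¬ v.val < x₀)).card = n - x₀ := cardB hx0n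
    obtain ⟨L, hLB, hLcard⟩ := Finset.exists_subset_card_eq
      (show g ≤ (univ.filter (fun v : Fin n => ¬ v.val < x₀)).card by omega)
    have hnpos : 0 < n := by omega
    set c : Fin n := ⟨0, hnpos⟩ with hcdef
    have hcval : c.val < x₀ := hx0pos
    have hL : ∀ l ∈ L, ¬ l.val < x₀ := fun l hl => (Finset.mem_filter.mp (hLB hl)).2
    have hcL : c ∉ L := fun h => (hL c h) hcval
    refine ⟨myG n x₀ c L, ?_, ?_⟩
    · rw [ncard_myG, edge_removed hcL hx0n hcval hL, hLcard]
      omega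
    · rw [fCount_myG hcL, hLcard]
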